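/- Let C be a constructible ℓ-group of continuous functions X → M, let n, k ∈ ℕ, and let (O_{ij})_{i,j∈{1,…,n+k}} be an open sign condition on X all of whose members are C-cozero sets. Suppose there are f_1, …, f_n ∈ C such that O_{ij} = {x ∈ X : f_i(x) < f_j(x)} for all i, j ∈ {1,…,n}. Then there exist f_{n+1}, …, f_{n+k} ∈ C such that O_{ij} = {x ∈ X : f_i(x) < f_j(x)} for all i, j ∈ {1,…,n+k}. -/

import Mathlib

open Set

variable {X M : Type*} [TopologicalSpace X] [T2Space X]
  [AddCommGroup M] [LinearOrder M] [IsOrderedAddMonoid M] [Module ℚ M] [TopologicalSpace M] [OrderTopology M]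

/-- A `C`-zero set: the zero set of a member of `C`. -/
def IsZeroSetOf (C : Set (X → M)) (Z : Set X) : Prop := ∃ f ∈ C, Z = {x | f x = 0}

/-- A `C`-cozero set: the complement of a `C`-zero set. -/
def IsCozeroSetOf (C : Set (X → M)) (U : Set X) : Prop := ∃ f ∈ C, U = {x | f x ≠ 0}

/-- A `C`-constructible set: a finite Boolean combination of `C`-zero sets. -/
inductive IsConstructibleIn (C : Set (X → M)) : Set X → Prop
  | zeroSet {Z : Set X} : IsZeroSetOf C Z → IsConstructibleIn C Z
  | compl {Z : Set X} : IsConstructibleIn C Z → IsConstructibleIn C Zᶜ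
  | union {Z W : Set X} : IsConstructibleIn C Z → IsConstructibleIn C W →
      IsConstructibleIn C (Z ∪ W)

/-- A `C`-constructible function on `Z`: `Z` is covered by finitely many
`C`-constructible sets `Zs i` on each of which `g` agrees with a member of `C`. -/
def IsConstructibleFunOn (C : Set (X → M)) (Z : Set X) (g : X → M) : Prop :=
  ∃ (n : ℕ) (Zs : Fin n → Set X) (fs : Fin n → X → M),
    (∀ i, IsConstructibleIn C (Zs i)) ∧ (⋃ i, Zs i) = Z ∧
    (∀ i, fs i ∈ C) ∧ (∀ i, ∀ x ∈ Zs i, g x = fs i x)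

/-- A constructible ℓ-group of continuous functions `X → M` (Definition 2.1 of the
paper): a `ℚ`-vector sublattice of continuous functions `X → M` satisfying the
conditions (C1)–(C4). -/
structure ConstructibleLGroup (X M : Type*) [TopologicalSpace X] [T2Space X]
    [AddCommGroup M] [LinearOrder M] [IsOrderedAddMonoid M] [Module ℚ M] [TopologicalSpace M] [OrderTopology M] where
  carrier : Set (X → M)
  continuous_mem : ∀ f ∈ carrier, Continuous f
  zero_mem : (0 : X → M) ∈ carrier
  add_mem : ∀ f ∈ carrier, ∀ g ∈ carrier, f + g ∈ carrier
  neg_mem : ∀ f ∈ carrier, -f ∈ carrier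
  smul_mem : ∀ (q : ℚ), ∀ f ∈ carrier, q • f ∈ carrier
  sup_mem : ∀ f ∈ carrier, ∀ g ∈ carrier, f ⊔ g ∈ carrier
  inf_mem : ∀ f ∈ carrier, ∀ g ∈ carrier, f ⊓ g ∈ carrier
  /-- (C1) Every closed `C`-constructible set is a `C`-zero set. -/
  c1 : ∀ Z : Set X, IsClosed Z → IsConstructibleIn carrier Z → IsZeroSetOf carrier Z
  /-- (C2) The closure of every `C`-cozero set is `C`-constructible. -/
  c2 : ∀ U : Set X, IsCozeroSetOf carrier U → IsConstructibleIn carrier (closure U)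
  /-- (C3) Continuous `C`-constructible functions on closed `C`-constructible
  sets extend to members of `C`. -/
  c3 : ∀ A : Set X, IsClosed A → IsConstructibleIn carrier A →
    ∀ g : X → M, ContinuousOn g A → IsConstructibleFunOn carrier A g →
      ∃ f ∈ carrier, ∀ x ∈ A, f x = g x
  /-- (C4) Glueing over finite closed `C`-constructible covers of `X`. -/
  c4 : ∀ (n : ℕ) (A : Fin n → Set X), (∀ i, IsClosed (A i)) →
    (∀ i, IsConstructibleIn carrier (A i)) → (⋃ i, A i) = univ →
    ∀ f : X → M, (∀ i, ContinuousOn f (A i) ∧ IsConstructibleFunOn carrier (A i) f) →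
      f ∈ carrier


set_option linter.unusedSectionVars false
set_option maxHeartbeats 1000000

-- ===== half lemmas =====
lemma sc7_half_add_half (m : M) : (2⁻¹ : ℚ) • m + (2⁻¹ : ℚ) • m = m := by
  rw [← add_smul]; norm_num

lemma sc7_nonneg_of_add_self {m : M} (h : 0 ≤ m + m) : 0 ≤ m := by
  by_contra h'
  push_neg at h'
  exact absurd h (not_le.2 (add_neg h' h'))

lemma sc7_pos_of_add_self {m : M} (h : 0 < m + m) : 0 < m := by
  by_contra h'
  push_neg at h'
  exact absurd h (not_lt.2 (add_nonpos h' h'))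

lemma sc7_le_of_add_le_add {a b : M} (h : a + a ≤ b + b) : a ≤ b := by
  by_contra h'
  push_neg at h'
  exact absurd h (not_le.2 (add_lt_add h' h'))

lemma sc7_half_nonneg {m : M} (h : 0 ≤ m) : 0 ≤ (2⁻¹ : ℚ) • m :=
  sc7_nonneg_of_add_self (by rw [sc7_half_add_half]; exact h)

lemma sc7_half_pos {m : M} (h : 0 < m) : 0 < (2⁻¹ : ℚ) • m :=
  sc7_pos_of_add_self (by rw [sc7_half_add_half]; exact h)

lemma sc7_half_le_self {m : M} (h : 0 ≤ m) : (2⁻¹ : ℚ) • m ≤ m := by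
  have h2 := sc7_half_nonneg h
  have key : m - (2⁻¹ : ℚ) • m = (2⁻¹ : ℚ) • m := by
    nth_rw 1 [← sc7_half_add_half m]; abel
  rw [← sub_nonneg, key]; exact h2

-- ===== constructibility helpers =====
section constr
variable {C : Set (X → M)}

lemma sc7_constructible_univ (h0 : (0 : X → M) ∈ C) : IsConstructibleIn C (univ : Set X) :=
  .zeroSet ⟨0, h0, by ext x; simp⟩

lemma sc7_constructible_empty (h0 : (0 : X → M) ∈ C) : IsConstructibleIn C (∅ : Set X) := by
  have := (sc7_constructible_univ h0).compl
  simpa using this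

lemma IsConstructibleIn.inter {Z W : Set X} (hZ : IsConstructibleIn C Z)
    (hW : IsConstructibleIn C W) : IsConstructibleIn C (Z ∩ W) := by
  have := (hZ.compl.union hW.compl).compl
  simpa [compl_union] using this

lemma sc7_constructible_of_cozero {U : Set X} (h : IsCozeroSetOf C U) :
    IsConstructibleIn C U := by
  obtain ⟨e, he, rfl⟩ := h
  exact (IsConstructibleIn.zeroSet ⟨e, he, rfl⟩).compl

lemma sc7_constructible_iUnion {q : ℕ} (h0 : (0 : X → M) ∈ C) {P : Fin q → Set X}
    (h : ∀ i, IsConstructibleIn C (P i)) : IsConstructibleIn C (⋃ i, P i) := by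
  induction q with
  | zero => rw [iUnion_of_empty]; exact sc7_constructible_empty h0
  | succ q ih =>
      have hdec : (⋃ i, P i) = P 0 ∪ ⋃ i : Fin q, P i.succ := by
        ext x; simp [Fin.exists_fin_succ]
      rw [hdec]
      exact (h 0).union (ih (fun i => h i.succ))

end constr

-- ===== cozero helpers =====
section cozero
variable {C : Set (X → M)}

lemma sc7_cozero_inf {U V : Set X} (hUV : IsCozeroSetOf C U ∧ IsCozeroSetOf C V)
    (hsup : ∀ f ∈ C, ∀ g ∈ C, f ⊔ g ∈ C) (hinf : ∀ f ∈ C, ∀ g ∈ C, f ⊓ g ∈ C)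
    (hneg : ∀ f ∈ C, -f ∈ C) :
    IsCozeroSetOf C (U ∩ V) := by
  obtain ⟨⟨a, ha, rfl⟩, ⟨b, hb, rfl⟩⟩ := hUV
  refine ⟨(a ⊔ -a) ⊓ (b ⊔ -b), hinf _ (hsup a ha (-a) (hneg a ha)) _ (hsup b hb (-b) (hneg b hb)), ?_⟩
  ext x
  simp only [mem_inter_iff, mem_setOf_eq, Pi.inf_apply, Pi.sup_apply, Pi.neg_apply]
  have ha' : a x ⊔ -a x = |a x| := rfl
  have hb' : b x ⊔ -b x = |b x| := rfl
  rw [ha', hb']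
  constructor
  · rintro ⟨h1, h2⟩
    have : 0 < |a x| ⊓ |b x| := lt_min (abs_pos.2 h1) (abs_pos.2 h2)
    exact ne_of_gt this
  · intro h
    constructor
    · intro h0; rw [h0] at h; simp at h
    · intro h0; rw [h0] at h; simp at h

lemma sc7_cozero_iInter_succ {q : ℕ} (P : Fin (q + 1) → Set X)
    (h : ∀ i, IsCozeroSetOf C (P i))
    (hsup : ∀ f ∈ C, ∀ g ∈ C, f ⊔ g ∈ C) (hinf : ∀ f ∈ C, ∀ g ∈ C, f ⊓ g ∈ C)
    (hneg : ∀ f ∈ C, -f ∈ C) :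
    IsCozeroSetOf C (⋂ i, P i) := by
  induction q with
  | zero =>
      have : (⋂ i, P i) = P 0 := by ext x; simp [Fin.forall_fin_one]
      rw [this]; exact h 0
  | succ q ih =>
      have hdec : (⋂ i, P i) = P 0 ∩ ⋂ i : Fin (q + 1), P i.succ := by
        ext x; simp [Fin.forall_fin_succ]
      rw [hdec]
      exact sc7_cozero_inf ⟨h 0, ih _ (fun i => h i.succ)⟩ hsup hinf hneg

end cozero

-- ===== fold (clip) lemmas, order level =====
section fold
variable {n : ℕ}

lemma sc7_le_foldr (S : Finset (Fin n)) (a b : Fin n → M)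
    (L : List (Fin n)) (v : M)
    (hpair : ∀ i ∈ L, ∀ j ∈ L, i ∈ S → j ∉ S → a i ≤ b j) :
    ∀ i ∈ L, i ∈ S →
      a i ≤ L.foldr (fun i v => if i ∈ S then v ⊔ a i else v ⊓ b i) v := by
  induction L with
  | nil => intro i hi; simp at hi
  | cons hd tl ih =>
      intro i hi hiS
      have hpair' : ∀ i ∈ tl, ∀ j ∈ tl, i ∈ S → j ∉ S → a i ≤ b j :=
        fun i hi j hj => hpair i (List.mem_cons_of_mem _ hi) j (List.mem_cons_of_mem _ hj)
      simp only [List.foldr_cons]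
      by_cases hhd : hd ∈ S
      · rw [if_pos hhd]
        rcases List.mem_cons.1 hi with rfl | hi'
        · exact le_sup_right
        · exact (ih hpair' i hi' hiS).trans le_sup_left
      · rw [if_neg hhd]
        rcases List.mem_cons.1 hi with rfl | hi'
        · exact absurd hiS hhd
        · exact le_inf (ih hpair' i hi' hiS)
            (hpair i (List.mem_cons_of_mem _ hi') hd (List.mem_cons_self) hiS hhd)

lemma sc7_foldr_le (S : Finset (Fin n)) (a b : Fin n → M)
    (L : List (Fin n)) (v : M)
    (hpair : ∀ i ∈ L, ∀ j ∈ L, i ∈ S → j ∉ S → a i ≤ b j) :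
    ∀ j ∈ L, j ∉ S →
      L.foldr (fun i v => if i ∈ S then v ⊔ a i else v ⊓ b i) v ≤ b j := by
  induction L with
  | nil => intro j hj; simp at hj
  | cons hd tl ih =>
      intro j hj hjS
      have hpair' : ∀ i ∈ tl, ∀ j ∈ tl, i ∈ S → j ∉ S → a i ≤ b j :=
        fun i hi j hj => hpair i (List.mem_cons_of_mem _ hi) j (List.mem_cons_of_mem _ hj)
      simp only [List.foldr_cons]
      by_cases hhd : hd ∈ S
      · rw [if_pos hhd]
        rcases List.mem_cons.1 hj with rfl | hj'
        · exact absurd hhd hjS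
        · exact sup_le (ih hpair' j hj' hjS)
            (hpair hd (List.mem_cons_self) j (List.mem_cons_of_mem _ hj') hhd hjS)
      · rw [if_neg hhd]
        rcases List.mem_cons.1 hj with rfl | hj'
        · exact inf_le_right
        · exact inf_le_left.trans (ih hpair' j hj' hjS)

lemma sc7_foldr_eq (S : Finset (Fin n)) (a b : Fin n → M)
    (L : List (Fin n)) (v : M)
    (ha : ∀ i ∈ L, i ∈ S → a i ≤ v) (hb : ∀ j ∈ L, j ∉ S → v ≤ b j) :
    L.foldr (fun i v => if i ∈ S then v ⊔ a i else v ⊓ b i) v = v := by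
  induction L with
  | nil => rfl
  | cons hd tl ih =>
      simp only [List.foldr_cons]
      rw [ih (fun i hi => ha i (List.mem_cons_of_mem _ hi))
          (fun j hj => hb j (List.mem_cons_of_mem _ hj))]
      by_cases hhd : hd ∈ S
      · rw [if_pos hhd]; exact sup_eq_left.2 (ha hd (List.mem_cons_self) hhd)
      · rw [if_neg hhd]; exact inf_eq_left.2 (hb hd (List.mem_cons_self) hhd)

lemma sc7_foldr_apply (S : Finset (Fin n)) (A B : Fin n → X → M)
    (L : List (Fin n)) (t : X → M) (x : X) :
    (L.foldr (fun i t => if i ∈ S then t ⊔ A i else t ⊓ B i) t) x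
      = L.foldr (fun i v => if i ∈ S then v ⊔ A i x else v ⊓ B i x) (t x) := by
  induction L with
  | nil => rfl
  | cons hd tl ih =>
      simp only [List.foldr_cons]
      by_cases hhd : hd ∈ S
      · rw [if_pos hhd, if_pos hhd, Pi.sup_apply, ih]
      · rw [if_neg hhd, if_neg hhd, Pi.inf_apply, ih]

end fold

-- ===== continuity helper =====
lemma sc7_cwa_iUnion {q : ℕ} {Z : Fin q → Set X} {h : X → M} {x : X}
    (H : ∀ l, ContinuousWithinAt h (Z l) x) :
    ContinuousWithinAt h (⋃ l, Z l) x := by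
  induction q with
  | zero =>
      rw [iUnion_of_empty]
      exact continuousWithinAt_of_notMem_closure (by simp)
  | succ q ih =>
      have hdec : (⋃ l, Z l) = Z 0 ∪ ⋃ l : Fin q, Z l.succ := by
        ext y; simp [Fin.exists_fin_succ]
      rw [hdec]
      exact (H 0).union (ih (fun l => H l.succ))

-- nonneg cozero witness
lemma sc7_nonneg_witness (CL : ConstructibleLGroup X M) {U : Set X}
    (h : IsCozeroSetOf CL.carrier U) :
    ∃ φ : X → M, φ ∈ CL.carrier ∧ (∀ x, 0 ≤ φ x) ∧ (∀ x, x ∈ U ↔ 0 < φ x) ∧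
      (∀ x, x ∉ U → φ x = 0) := by
  obtain ⟨e, he, rfl⟩ := h
  refine ⟨e ⊔ -e, CL.sup_mem e he (-e) (CL.neg_mem e he), ?_, ?_, ?_⟩
  · intro x
    have : (e ⊔ -e) x = |e x| := rfl
    rw [this]; exact abs_nonneg _
  · intro x
    have : (e ⊔ -e) x = |e x| := rfl
    rw [mem_setOf_eq, this]
    exact abs_pos.symm
  · intro x hx
    have h1 : (e ⊔ -e) x = |e x| := rfl
    rw [mem_setOf_eq, not_not] at hx
    rw [h1, hx, abs_zero]

lemma sc7_main_step (CL : ConstructibleLGroup X M) (n : ℕ)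
    (O : Fin (n + 1) → Fin (n + 1) → Set X)
    (hopen : ∀ i j, IsOpen (O i j))
    (hcoz : ∀ i j, IsCozeroSetOf CL.carrier (O i j))
    (hO1 : ∀ i, O i i = ∅)
    (hO2 : ∀ i j l, O i j ∩ O j l ⊆ O i l)
    (hO3 : ∀ i j l, O i l ⊆ O i j ∪ O j l)
    (f : Fin n → X → M) (hf : ∀ i, f i ∈ CL.carrier)
    (hOf : ∀ i j : Fin n, O i.castSucc j.castSucc = {x | f i x < f j x}) :
    ∃ g ∈ CL.carrier, ∀ i : Fin n,
      O i.castSucc (Fin.last n) = {x | f i x < g x} ∧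
      O (Fin.last n) i.castSucc = {x | g x < f i x} := by
  classical
  set m : Fin (n + 1) := Fin.last n with hm
  set U : Fin n → Set X := fun i => O i.castSucc m with hUdef
  set V : Fin n → Set X := fun i => O m i.castSucc with hVdef
  -- basic order facts
  have L2 : ∀ i j : Fin n, ∀ x, x ∈ U i → x ∉ U j → f i x < f j x := by
    intro i j x hx hx'
    rcases hO3 i.castSucc j.castSucc m hx with h | h
    · rw [hOf i j] at h; exact h
    · exact absurd h hx'
  have L3 : ∀ i j : Fin n, ∀ x, x ∈ V i → x ∉ V j → f j x < f i x := by
    intro i j x hx hx'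
    rcases hO3 m j.castSucc i.castSucc hx with h | h
    · exact absurd h hx'
    · rw [hOf j i] at h; exact h
  have LUV : ∀ i : Fin n, ∀ x, x ∈ U i → x ∉ V i := by
    intro i x hx hx'
    have h2 := hO2 i.castSucc m i.castSucc ⟨hx, hx'⟩
    rw [hO1] at h2; exact h2
  have LVU : ∀ i : Fin n, ∀ x, x ∈ V i → x ∉ U i :=
    fun i x hx hx' => LUV i x hx' hx
  have L1 : ∀ i j : Fin n, ∀ x, x ∈ U i → x ∈ V j → f i x < f j x :=
    fun i j x hx hx' => L2 i j x hx (LVU j x hx')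
  have L4 : ∀ i j : Fin n, ∀ x, x ∉ U i → x ∉ V i → x ∉ U j → x ∉ V j → f i x = f j x := by
    intro i j x h1 h2 h3 h4
    have hij : ¬ f i x < f j x := by
      intro hlt
      have hx : x ∈ O i.castSucc j.castSucc := by rw [hOf]; exact hlt
      rcases hO3 i.castSucc m j.castSucc hx with h | h
      · exact h1 h
      · exact h4 h
    have hji : ¬ f j x < f i x := by
      intro hlt
      have hx : x ∈ O j.castSucc i.castSucc := by rw [hOf]; exact hlt
      rcases hO3 j.castSucc m i.castSucc hx with h | h
      · exact h3 h
      · exact h2 h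
    exact le_antisymm (not_lt.1 hji) (not_lt.1 hij)
  -- nonneg witnesses
  choose φ hφmem hφ0 hφpos hφzero using fun i : Fin n => sc7_nonneg_witness CL (hcoz i.castSucc m)
  choose ψ hψmem hψ0 hψpos hψzero using fun i : Fin n => sc7_nonneg_witness CL (hcoz m i.castSucc)
  -- clipped correction terms
  set c : Fin n → Fin n → (X → M) := fun i j => (f j - f i) ⊔ φ j with hcdef
  set d : Fin n → Fin n → (X → M) := fun i j => (f i - f j) ⊔ ψ j with hddef
  have hcmem : ∀ i j, c i j ∈ CL.carrier := by
    intro i j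
    have hsub : f j - f i ∈ CL.carrier := by
      have := CL.add_mem (f j) (hf j) (-(f i)) (CL.neg_mem (f i) (hf i))
      simpa [sub_eq_add_neg] using this
    exact CL.sup_mem _ hsub _ (hφmem j)
  have hdmem : ∀ i j, d i j ∈ CL.carrier := by
    intro i j
    have hsub : f i - f j ∈ CL.carrier := by
      have := CL.add_mem (f i) (hf i) (-(f j)) (CL.neg_mem (f j) (hf j))
      simpa [sub_eq_add_neg] using this
    exact CL.sup_mem _ hsub _ (hψmem j)
  set cm : Fin n → (X → M) :=
    fun i => (List.finRange n).foldr (fun j t => c i j ⊓ t) (φ i) with hcmdef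
  set dm : Fin n → (X → M) :=
    fun i => (List.finRange n).foldr (fun j t => d i j ⊓ t) (ψ i) with hdmdef
  -- foldr-inf helper facts (proved generically over lists)
  have foldr_inf_mem : ∀ (w : Fin n → X → M) (base : X → M), base ∈ CL.carrier →
      (∀ j, w j ∈ CL.carrier) →
      (List.finRange n).foldr (fun j t => w j ⊓ t) base ∈ CL.carrier := by
    intro w base hbase hw
    induction (List.finRange n) with
    | nil => exact hbase
    | cons hd tl ih => exact CL.inf_mem _ (hw hd) _ ih
  have foldr_inf_apply : ∀ (w : Fin n → X → M) (base : X → M) (L : List (Fin n)) (x : X),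
      (L.foldr (fun j t => w j ⊓ t) base) x = L.foldr (fun j v => w j x ⊓ v) (base x) := by
    intro w base L x
    induction L with
    | nil => rfl
    | cons hd tl ih => simp only [List.foldr_cons, Pi.inf_apply, ih]
  have foldr_inf_le_base : ∀ (w : Fin n → M) (base : M) (L : List (Fin n)),
      L.foldr (fun j v => w j ⊓ v) base ≤ base := by
    intro w base L
    induction L with
    | nil => exact le_rfl
    | cons hd tl ih => exact inf_le_right.trans ih
  have foldr_inf_le : ∀ (w : Fin n → M) (base : M) (L : List (Fin n)) (j : Fin n), j ∈ L →
      L.foldr (fun j v => w j ⊓ v) base ≤ w j := by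
    intro w base L j hj
    induction L with
    | nil => simp at hj
    | cons hd tl ih =>
        rcases List.mem_cons.1 hj with rfl | hj'
        · exact inf_le_left
        · exact inf_le_right.trans (ih hj')
  have le_foldr_inf : ∀ (w : Fin n → M) (base : M) (L : List (Fin n)) (v : M),
      v ≤ base → (∀ j ∈ L, v ≤ w j) → v ≤ L.foldr (fun j v => w j ⊓ v) base := by
    intro w base L v hvb hvw
    induction L with
    | nil => exact hvb
    | cons hd tl ih =>
        exact le_inf (hvw hd (List.mem_cons_self))
          (ih (fun j hj => hvw j (List.mem_cons_of_mem _ hj)))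
  have lt_foldr_inf : ∀ (w : Fin n → M) (base : M) (L : List (Fin n)) (v : M),
      v < base → (∀ j ∈ L, v < w j) → v < L.foldr (fun j v => w j ⊓ v) base := by
    intro w base L v hvb hvw
    induction L with
    | nil => exact hvb
    | cons hd tl ih =>
        exact lt_inf_iff.2 ⟨hvw hd (List.mem_cons_self),
          ih (fun j hj => hvw j (List.mem_cons_of_mem _ hj))⟩
  -- basic facts about cm, dm
  have hcm_mem : ∀ i, cm i ∈ CL.carrier := fun i => foldr_inf_mem _ _ (hφmem i) (fun j => hcmem i j)
  have hdm_mem : ∀ i, dm i ∈ CL.carrier := fun i => foldr_inf_mem _ _ (hψmem i) (fun j => hdmem i j)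
  have hcval : ∀ i x, cm i x = (List.finRange n).foldr (fun j v => c i j x ⊓ v) (φ i x) :=
    fun i x => foldr_inf_apply _ _ _ x
  have hdval : ∀ i x, dm i x = (List.finRange n).foldr (fun j v => d i j x ⊓ v) (ψ i x) :=
    fun i x => foldr_inf_apply _ _ _ x
  have hc0 : ∀ i j x, 0 ≤ c i j x := by
    intro i j x
    have : (c i j) x = (f j x - f i x) ⊔ φ j x := rfl
    rw [this]; exact le_sup_of_le_right (hφ0 j x)
  have hd0 : ∀ i j x, 0 ≤ d i j x := by
    intro i j x
    have : (d i j) x = (f i x - f j x) ⊔ ψ j x := rfl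
    rw [this]; exact le_sup_of_le_right (hψ0 j x)
  have hcm0 : ∀ i x, 0 ≤ cm i x := by
    intro i x; rw [hcval]
    exact le_foldr_inf _ _ _ _ (hφ0 i x) (fun j _ => hc0 i j x)
  have hdm0 : ∀ i x, 0 ≤ dm i x := by
    intro i x; rw [hdval]
    exact le_foldr_inf _ _ _ _ (hψ0 i x) (fun j _ => hd0 i j x)
  have hcm_le_phi : ∀ i x, cm i x ≤ φ i x := by
    intro i x; rw [hcval]; exact foldr_inf_le_base _ _ _
  have hdm_le_psi : ∀ i x, dm i x ≤ ψ i x := by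
    intro i x; rw [hdval]; exact foldr_inf_le_base _ _ _
  have hcm_le : ∀ i j x, cm i x ≤ c i j x := by
    intro i j x; rw [hcval]; exact foldr_inf_le _ _ _ j (List.mem_finRange j)
  have hdm_le : ∀ i j x, dm i x ≤ d i j x := by
    intro i j x; rw [hdval]; exact foldr_inf_le _ _ _ j (List.mem_finRange j)
  have hcm_zero : ∀ i x, x ∉ U i → cm i x = 0 := by
    intro i x hx
    exact le_antisymm ((hcm_le_phi i x).trans_eq (hφzero i x hx)) (hcm0 i x)
  have hdm_zero : ∀ i x, x ∉ V i → dm i x = 0 := by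
    intro i x hx
    exact le_antisymm ((hdm_le_psi i x).trans_eq (hψzero i x hx)) (hdm0 i x)
  have hcm_pos : ∀ i x, x ∈ U i → 0 < cm i x := by
    intro i x hx
    rw [hcval]
    refine lt_foldr_inf _ _ _ _ ((hφpos i x).1 hx) ?_
    intro j _
    by_cases hUj : x ∈ U j
    · have : (c i j) x = (f j x - f i x) ⊔ φ j x := rfl
      rw [this]; exact lt_sup_of_lt_right ((hφpos j x).1 hUj)
    · have : (c i j) x = (f j x - f i x) ⊔ φ j x := rfl
      rw [this]
      exact lt_sup_of_lt_left (sub_pos.2 (L2 i j x hx hUj))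
  have hdm_pos : ∀ i x, x ∈ V i → 0 < dm i x := by
    intro i x hx
    rw [hdval]
    refine lt_foldr_inf _ _ _ _ ((hψpos i x).1 hx) ?_
    intro j _
    by_cases hVj : x ∈ V j
    · have : (d i j) x = (f i x - f j x) ⊔ ψ j x := rfl
      rw [this]; exact lt_sup_of_lt_right ((hψpos j x).1 hVj)
    · have : (d i j) x = (f i x - f j x) ⊔ ψ j x := rfl
      rw [this]
      exact lt_sup_of_lt_left (sub_pos.2 (L3 i j x hx hVj))
  -- gap bounds
  have hcm_gap : ∀ i l x, x ∈ U i → x ∉ U l → cm i x ≤ f l x - f i x := by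
    intro i l x hx hxl
    refine (hcm_le i l x).trans ?_
    have : (c i l) x = (f l x - f i x) ⊔ φ l x := rfl
    rw [this, hφzero l x hxl]
    exact sup_le le_rfl (le_of_lt (sub_pos.2 (L2 i l x hx hxl)))
  have hdm_gap : ∀ i l x, x ∈ V i → x ∉ V l → dm i x ≤ f i x - f l x := by
    intro i l x hx hxl
    refine (hdm_le i l x).trans ?_
    have : (d i l) x = (f i x - f l x) ⊔ ψ l x := rfl
    rw [this, hψzero l x hxl]
    exact sup_le le_rfl (le_of_lt (sub_pos.2 (L3 i l x hx hxl)))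
  -- the A and B families
  set A : Fin n → (X → M) := fun i => f i + (2⁻¹ : ℚ) • cm i with hAdef
  set B : Fin n → (X → M) := fun i => f i - (2⁻¹ : ℚ) • dm i with hBdef
  have hAmem : ∀ i, A i ∈ CL.carrier := by
    intro i
    exact CL.add_mem _ (hf i) _ (CL.smul_mem _ _ (hcm_mem i))
  have hBmem : ∀ i, B i ∈ CL.carrier := by
    intro i
    have : B i = f i + -((2⁻¹ : ℚ) • dm i) := by
      ext x; simp [hBdef, sub_eq_add_neg]
    rw [this]
    exact CL.add_mem _ (hf i) _ (CL.neg_mem _ (CL.smul_mem _ _ (hdm_mem i)))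
  have hAval : ∀ i x, A i x = f i x + (2⁻¹ : ℚ) • cm i x := by
    intro i x; simp [hAdef, Pi.smul_apply]
  have hBval : ∀ i x, B i x = f i x - (2⁻¹ : ℚ) • dm i x := by
    intro i x; simp [hBdef, Pi.smul_apply]
  have hA_gt : ∀ i x, x ∈ U i → f i x < A i x := by
    intro i x hx
    rw [hAval]
    exact lt_add_of_pos_right _ (sc7_half_pos (hcm_pos i x hx))
  have hB_lt : ∀ i x, x ∈ V i → B i x < f i x := by
    intro i x hx
    rw [hBval]
    exact sub_lt_self _ (sc7_half_pos (hdm_pos i x hx))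
  have hA_eq : ∀ i x, x ∉ U i → A i x = f i x := by
    intro i x hx
    rw [hAval, hcm_zero i x hx, smul_zero, add_zero]
  have hB_eq : ∀ i x, x ∉ V i → B i x = f i x := by
    intro i x hx
    rw [hBval, hdm_zero i x hx, smul_zero, sub_zero]
  -- key: A i ≤ f l at boundary points
  have hA_le_f : ∀ i l x, x ∈ U i → x ∉ U l → A i x ≤ f l x := by
    intro i l x hx hxl
    rw [hAval]
    have h1 : (2⁻¹ : ℚ) • cm i x ≤ f l x - f i x :=
      (sc7_half_le_self (hcm0 i x)).trans (hcm_gap i l x hx hxl)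
    calc f i x + (2⁻¹ : ℚ) • cm i x ≤ f i x + (f l x - f i x) := add_le_add_right h1 _
      _ = f l x := add_sub_cancel _ _
  have hf_le_B : ∀ i l x, x ∈ V i → x ∉ V l → f l x ≤ B i x := by
    intro i l x hx hxl
    rw [hBval]
    have h1 : (2⁻¹ : ℚ) • dm i x ≤ f i x - f l x :=
      (sc7_half_le_self (hdm0 i x)).trans (hdm_gap i l x hx hxl)
    have := sub_le_sub_left h1 (f i x)
    calc f l x = f i x - (f i x - f l x) := by abel
      _ ≤ f i x - (2⁻¹ : ℚ) • dm i x := sub_le_sub_left h1 _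
  -- key pairing inequality
  have hAB : ∀ i j x, x ∈ U i → x ∈ V j → A i x ≤ B j x := by
    intro i j x hxU hxV
    have hxnUj : x ∉ U j := LVU j x hxV
    have hxnVi : x ∉ V i := LUV i x hxU
    have hgap1 : cm i x ≤ f j x - f i x := hcm_gap i j x hxU hxnUj
    have hgap2 : dm j x ≤ f j x - f i x := hdm_gap j i x hxV hxnVi
    set D : M := f j x - f i x with hD
    have hsum : (2⁻¹ : ℚ) • cm i x + (2⁻¹ : ℚ) • dm j x ≤ D := by
      refine sc7_le_of_add_le_add ?_
      have h1 : ((2⁻¹ : ℚ) • cm i x + (2⁻¹ : ℚ) • dm j x) +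
          ((2⁻¹ : ℚ) • cm i x + (2⁻¹ : ℚ) • dm j x)
          = cm i x + dm j x := by
        rw [add_add_add_comm, sc7_half_add_half, sc7_half_add_half]
      rw [h1]
      exact add_le_add hgap1 hgap2
    rw [hAval, hBval, ← sub_nonneg]
    have : f j x - (2⁻¹ : ℚ) • dm j x - (f i x + (2⁻¹ : ℚ) • cm i x)
        = D - ((2⁻¹ : ℚ) • cm i x + (2⁻¹ : ℚ) • dm j x) := by
      rw [hD]; abel
    rw [this, sub_nonneg]
    exact hsum
  -- the closed sets Z i and T
  set Z : Fin n → Set X := fun i => (U i ∪ V i)ᶜ with hZdef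
  set T : Set X := ⋃ i, Z i with hTdef
  have hZmem : ∀ i x, x ∈ Z i ↔ x ∉ U i ∧ x ∉ V i := by
    intro i x
    rw [hZdef]
    simp [not_or]
  have hZclosed : ∀ i, IsClosed (Z i) := fun i =>
    (IsOpen.union (hopen _ _) (hopen _ _)).isClosed_compl
  have hTclosed : IsClosed T := isClosed_iUnion_of_finite hZclosed
  have hZcon : ∀ i, IsConstructibleIn CL.carrier (Z i) := by
    intro i
    exact ((sc7_constructible_of_cozero (hcoz i.castSucc m)).union
      (sc7_constructible_of_cozero (hcoz m i.castSucc))).compl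
  have hTcon : IsConstructibleIn CL.carrier T := sc7_constructible_iUnion CL.zero_mem hZcon
  -- the glued function h on T and its extension Θ
  set h : X → M := fun x => if hx : ∃ l, x ∈ Z l then f hx.choose x else 0 with hhdef
  have hhval : ∀ l x, x ∈ Z l → h x = f l x := by
    intro l x hx
    have hex : ∃ l, x ∈ Z l := ⟨l, hx⟩
    have hch := hex.choose_spec
    rw [hhdef]
    simp only [dif_pos hex]
    rcases (hZmem _ x).1 hch with ⟨h1, h2⟩
    rcases (hZmem _ x).1 hx with ⟨h3, h4⟩
    exact L4 _ l x h1 h2 h3 h4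
  have hsubT : ∀ l, Z l ⊆ T := fun l => subset_iUnion Z l
  have hcont : ContinuousOn h T := by
    intro x hx
    refine sc7_cwa_iUnion (fun l => ?_)
    by_cases hxl : x ∈ Z l
    · exact ((CL.continuous_mem _ (hf l)).continuousWithinAt).congr
        (fun y hy => hhval l y hy) (hhval l x hxl)
    · exact continuousWithinAt_of_notMem_closure (by rwa [(hZclosed l).closure_eq])
  have hconfun : IsConstructibleFunOn CL.carrier T h :=
    ⟨n, Z, f, hZcon, rfl, hf, fun i x hx => hhval i x hx⟩
  obtain ⟨Θ, hΘmem, hΘ⟩ := CL.c3 T hTclosed hTcon h hcont hconfun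
  have hΘval : ∀ l x, x ∈ Z l → Θ x = f l x :=
    fun l x hx => (hΘ x (hsubT l hx)).trans (hhval l x hx)
  -- the clipped functions θ S
  set θ : Finset (Fin n) → (X → M) := fun S =>
    (List.finRange n).foldr (fun i t => if i ∈ S then t ⊔ A i else t ⊓ B i) Θ with hθdef
  have hθmem : ∀ S, θ S ∈ CL.carrier := by
    intro S
    rw [hθdef]
    induction (List.finRange n) with
    | nil => exact hΘmem
    | cons hd tl ih =>
        simp only [List.foldr_cons]
        by_cases hhd : hd ∈ S
        · rw [if_pos hhd]; exact CL.sup_mem _ ih _ (hAmem hd)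
        · rw [if_neg hhd]; exact CL.inf_mem _ ih _ (hBmem hd)
  have hθval : ∀ S x, θ S x
      = (List.finRange n).foldr (fun i v => if i ∈ S then v ⊔ A i x else v ⊓ B i x) (Θ x) := by
    intro S x
    rw [hθdef]
    exact sc7_foldr_apply S A B _ Θ x
  -- the open pieces W S
  set W : Finset (Fin n) → Set X := fun S => ⋂ i, (if i ∈ S then U i else V i) with hWdef
  have hWU : ∀ S x, x ∈ W S → ∀ i ∈ S, x ∈ U i := by
    intro S x hx i hi
    have := mem_iInter.1 hx i
    rwa [if_pos hi] at this
  have hWV : ∀ S x, x ∈ W S → ∀ i, i ∉ S → x ∈ V i := by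
    intro S x hx i hi
    have := mem_iInter.1 hx i
    rwa [if_neg hi] at this
  have hWintro : ∀ S x, (∀ i ∈ S, x ∈ U i) → (∀ i, i ∉ S → x ∈ V i) → x ∈ W S := by
    intro S x h1 h2
    rw [hWdef]
    rw [mem_iInter]
    intro i
    by_cases hi : i ∈ S
    · rw [if_pos hi]; exact h1 i hi
    · rw [if_neg hi]; exact h2 i hi
  have hclnotV : ∀ S x, x ∈ closure (W S) → ∀ i ∈ S, x ∉ V i := by
    intro S x hx i hi hV
    rcases mem_closure_iff.1 hx (V i) (hopen _ _) hV with ⟨y, hyV, hyW⟩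
    exact LUV i y (hWU S y hyW i hi) hyV
  have hclnotU : ∀ S x, x ∈ closure (W S) → ∀ i, i ∉ S → x ∉ U i := by
    intro S x hx i hi hU
    rcases mem_closure_iff.1 hx (U i) (hopen _ _) hU with ⟨y, hyU, hyW⟩
    exact LUV i y hyU (hWV S y hyW i hi)
  have hABcl : ∀ S, ∀ i ∈ S, ∀ j, j ∉ S → ∀ x ∈ closure (W S), A i x ≤ B j x := by
    intro S i hi j hj x hx
    have hsubset : W S ⊆ {y | A i y ≤ B j y} :=
      fun y hy => hAB i j y (hWU S y hy i hi) (hWV S y hy j hj)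
    have hcl : IsClosed {y | A i y ≤ B j y} :=
      isClosed_le (CL.continuous_mem _ (hAmem i)) (CL.continuous_mem _ (hBmem j))
    exact (closure_minimal hsubset hcl) hx
  -- boundary values of θ S
  have hθbd : ∀ S x, x ∈ closure (W S) → ∀ l, x ∈ Z l → θ S x = f l x := by
    intro S x hx l hl
    obtain ⟨hlU, hlV⟩ := (hZmem l x).1 hl
    rw [hθval, hΘval l x hl]
    refine sc7_foldr_eq S (fun i => A i x) (fun i => B i x) _ _ ?_ ?_
    · intro i _ hiS
      have hnotV := hclnotV S x hx i hiS
      by_cases hU : x ∈ U i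
      · exact hA_le_f i l x hU hlU
      · show A i x ≤ f l x
        rw [hA_eq i x hU]
        exact le_of_eq (L4 i l x hU hnotV hlU hlV)
    · intro j _ hjS
      have hnotU := hclnotU S x hx j hjS
      by_cases hV : x ∈ V j
      · exact hf_le_B j l x hV hlV
      · show f l x ≤ B j x
        rw [hB_eq j x hV]
        exact le_of_eq (L4 l j x hlU hlV hnotU hV)
  -- strict bounds on W S
  have hθgt : ∀ S x, x ∈ W S → ∀ i ∈ S, f i x < θ S x := by
    intro S x hxW i hi
    have hpair : ∀ i ∈ List.finRange n, ∀ j ∈ List.finRange n,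
        i ∈ S → j ∉ S → A i x ≤ B j x :=
      fun i _ j _ hiS hjS => hAB i j x (hWU S x hxW i hiS) (hWV S x hxW j hjS)
    have hle := sc7_le_foldr S (fun i => A i x) (fun i => B i x) (List.finRange n) (Θ x)
      hpair i (List.mem_finRange i) hi
    rw [hθval]
    exact lt_of_lt_of_le (hA_gt i x (hWU S x hxW i hi)) hle
  have hθlt : ∀ S x, x ∈ W S → ∀ j, j ∉ S → θ S x < f j x := by
    intro S x hxW j hj
    have hpair : ∀ i ∈ List.finRange n, ∀ j ∈ List.finRange n,
        i ∈ S → j ∉ S → A i x ≤ B j x :=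
      fun i _ j _ hiS hjS => hAB i j x (hWU S x hxW i hiS) (hWV S x hxW j hjS)
    have hle := sc7_foldr_le S (fun i => A i x) (fun i => B i x) (List.finRange n) (Θ x)
      hpair j (List.mem_finRange j) hj
    rw [hθval]
    exact lt_of_le_of_lt hle (hB_lt j x (hWV S x hxW j hj))
  -- the sign pattern of a point and the global function g
  set Sx : X → Finset (Fin n) := fun x => Finset.univ.filter (fun i => x ∈ U i) with hSxdef
  have hSx : ∀ x i, i ∈ Sx x ↔ x ∈ U i := by
    intro x i
    rw [hSxdef]
    simp
  set g : X → M := fun x => if x ∈ T then Θ x else θ (Sx x) x with hgdef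
  have hgT : ∀ x ∈ T, g x = Θ x := by
    intro x hx
    rw [hgdef]
    exact if_pos hx
  have hnotT : ∀ x, x ∉ T → ∀ i, x ∈ U i ∨ x ∈ V i := by
    intro x hx i
    by_contra hcon
    push_neg at hcon
    exact hx (hsubT i ((hZmem i x).2 ⟨hcon.1, hcon.2⟩))
  have hgW : ∀ x, x ∉ T → x ∈ W (Sx x) := by
    intro x hx
    refine hWintro _ x (fun i hi => (hSx x i).1 hi) (fun i hi => ?_)
    rcases hnotT x hx i with hU | hV
    · exact absurd ((hSx x i).2 hU) hi
    · exact hV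
  have hgval : ∀ x, x ∉ T → g x = θ (Sx x) x := by
    intro x hx
    rw [hgdef]
    exact if_neg hx
  have hgθ : ∀ S, ∀ x ∈ closure (W S), g x = θ S x := by
    intro S x hx
    by_cases hxT : x ∈ T
    · rcases mem_iUnion.1 hxT with ⟨l, hl⟩
      rw [hgT x hxT, hΘval l x hl, hθbd S x hx l hl]
    · have hSeq : Sx x = S := by
        ext i
        rw [hSx]
        constructor
        · intro hU
          by_contra hiS
          exact hclnotU S x hx i hiS hU
        · intro hiS
          rcases hnotT x hxT i with hU | hV
          · exact hU
          · exact absurd hV (hclnotV S x hx i hiS)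
      rw [hgval x hxT, hSeq]
  -- constructibility of the closures
  have hWcon : ∀ S, IsConstructibleIn CL.carrier (closure (W S)) := by
    intro S
    have hWS : W S = ⋂ i, (if i ∈ S then U i else V i) := rfl
    rw [hWS]
    rcases Nat.eq_zero_or_pos n with hn | hn
    · subst hn
      rw [iInter_of_empty, closure_univ]
      exact sc7_constructible_univ CL.zero_mem
    · obtain ⟨q, rfl⟩ : ∃ q, n = q + 1 := ⟨n - 1, by omega⟩
      refine CL.c2 _ ?_
      refine sc7_cozero_iInter_succ _ (fun i => ?_) CL.sup_mem CL.inf_mem CL.neg_mem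
      by_cases hi : i ∈ S
      · rw [if_pos hi]; exact hcoz i.castSucc m
      · rw [if_neg hi]; exact hcoz m i.castSucc
  -- g belongs to C by (C4)
  have hgmem : g ∈ CL.carrier := by
    set Nn : ℕ := Fintype.card (Finset (Fin n)) with hNn
    set eqv : Finset (Fin n) ≃ Fin Nn := Fintype.equivFin _ with heqv
    set As : Fin (Nn + 1) → Set X := Fin.cons T (fun k => closure (W (eqv.symm k))) with hAs
    refine CL.c4 (Nn + 1) As ?_ ?_ ?_ g ?_
    · intro idx
      refine Fin.cases ?_ ?_ idx
      · rw [hAs, Fin.cons_zero]; exact hTclosed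
      · intro k; rw [hAs, Fin.cons_succ]; exact isClosed_closure
    · intro idx
      refine Fin.cases ?_ ?_ idx
      · rw [hAs, Fin.cons_zero]; exact hTcon
      · intro k; rw [hAs, Fin.cons_succ]; exact hWcon _
    · rw [eq_univ_iff_forall]
      intro x
      rw [mem_iUnion]
      by_cases hxT : x ∈ T
      · exact ⟨0, by rw [hAs, Fin.cons_zero]; exact hxT⟩
      · refine ⟨(eqv (Sx x)).succ, ?_⟩
        rw [hAs, Fin.cons_succ, Equiv.symm_apply_apply]
        exact subset_closure (hgW x hxT)
    · intro idx
      refine Fin.cases ?_ ?_ idx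
      · constructor
        · rw [hAs, Fin.cons_zero]
          exact ((CL.continuous_mem Θ hΘmem).continuousOn).congr (fun x hx => hgT x hx)
        · rw [hAs, Fin.cons_zero]
          exact ⟨1, fun _ => T, fun _ => Θ, fun _ => hTcon, by rw [iUnion_const], fun _ => hΘmem,
            fun _ x hx => hgT x hx⟩
      · intro k
        constructor
        · rw [hAs, Fin.cons_succ]
          exact ((CL.continuous_mem _ (hθmem (eqv.symm k))).continuousOn).congr
            (fun x hx => hgθ (eqv.symm k) x hx)
        · rw [hAs, Fin.cons_succ]
          exact ⟨1, fun _ => closure (W (eqv.symm k)), fun _ => θ (eqv.symm k),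
            fun _ => hWcon _, by rw [iUnion_const], fun _ => hθmem _, fun _ x hx => hgθ (eqv.symm k) x hx⟩
  -- conclusion
  refine ⟨g, hgmem, fun i => ⟨?_, ?_⟩⟩
  · ext x
    simp only [mem_setOf_eq]
    constructor
    · intro hx
      by_cases hxT : x ∈ T
      · rcases mem_iUnion.1 hxT with ⟨l, hl⟩
        obtain ⟨hlU, _⟩ := (hZmem l x).1 hl
        rw [hgT x hxT, hΘval l x hl]
        exact L2 i l x hx hlU
      · rw [hgval x hxT]
        exact hθgt (Sx x) x (hgW x hxT) i ((hSx x i).2 hx)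
    · intro hlt
      by_contra hxU
      by_cases hxT : x ∈ T
      · rcases mem_iUnion.1 hxT with ⟨l, hl⟩
        obtain ⟨hlU, hlV⟩ := (hZmem l x).1 hl
        rw [hgT x hxT, hΘval l x hl] at hlt
        by_cases hxV : x ∈ V i
        · exact absurd hlt (not_lt.2 (le_of_lt (L3 i l x hxV hlV)))
        · exact absurd hlt (not_lt.2 (le_of_eq (L4 l i x hlU hlV hxU hxV)))
      · rw [hgval x hxT] at hlt
        have hiS : i ∉ Sx x := fun hiS => hxU ((hSx x i).1 hiS)
        have := hθlt (Sx x) x (hgW x hxT) i hiS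
        exact absurd (hlt.trans this) (lt_irrefl _)
  · ext x
    simp only [mem_setOf_eq]
    constructor
    · intro hx
      by_cases hxT : x ∈ T
      · rcases mem_iUnion.1 hxT with ⟨l, hl⟩
        obtain ⟨_, hlV⟩ := (hZmem l x).1 hl
        rw [hgT x hxT, hΘval l x hl]
        exact L3 i l x hx hlV
      · rw [hgval x hxT]
        have hiS : i ∉ Sx x := fun hiS => LUV i x ((hSx x i).1 hiS) hx
        exact hθlt (Sx x) x (hgW x hxT) i hiS
    · intro hlt
      by_contra hxV
      by_cases hxT : x ∈ T
      · rcases mem_iUnion.1 hxT with ⟨l, hl⟩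
        obtain ⟨hlU, hlV⟩ := (hZmem l x).1 hl
        rw [hgT x hxT, hΘval l x hl] at hlt
        by_cases hxU : x ∈ U i
        · exact absurd hlt (not_lt.2 (le_of_lt (L2 i l x hxU hlU)))
        · exact absurd hlt (not_lt.2 (le_of_eq (L4 i l x hxU hxV hlU hlV)))
      · rw [hgval x hxT] at hlt
        have hiS : i ∈ Sx x := by
          rw [hSx]
          rcases hnotT x hxT i with hU | hV
          · exact hU
          · exact absurd hV hxV
        have := hθgt (Sx x) x (hgW x hxT) i hiS
        exact absurd (hlt.trans this) (lt_irrefl _)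

theorem stmt_7' (C : ConstructibleLGroup X M) (n k : ℕ)
    (O : Fin (n + k) → Fin (n + k) → Set X)
    (hopen : ∀ i j, IsOpen (O i j))
    (hcoz : ∀ i j, IsCozeroSetOf C.carrier (O i j))
    (hO1 : ∀ i, O i i = ∅)
    (hO2 : ∀ i j l, O i j ∩ O j l ⊆ O i l)
    (hO3 : ∀ i j l, O i l ⊆ O i j ∪ O j l)
    (f : Fin n → X → M) (hf : ∀ i, f i ∈ C.carrier)
    (hOf : ∀ i j : Fin n, O (Fin.castAdd k i) (Fin.castAdd k j) = {x | f i x < f j x}) :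
    ∃ g : Fin (n + k) → X → M,
      (∀ i, g i ∈ C.carrier) ∧
      (∀ i : Fin n, g (Fin.castAdd k i) = f i) ∧
      (∀ i j, O i j = {x | g i x < g j x}) := by
  induction k generalizing n with
  | zero =>
      exact ⟨f, hf, fun i => rfl, fun i j => hOf i j⟩
  | succ k ih =>
      have hle : (n + 1) ≤ n + (k + 1) := by omega
      obtain ⟨g0, hg0mem, hg0⟩ := sc7_main_step C n
        (fun i j => O (Fin.castLE hle i) (Fin.castLE hle j))
        (fun i j => hopen _ _) (fun i j => hcoz _ _)
        (fun i => hO1 _) (fun i j l => hO2 _ _ _) (fun i j l => hO3 _ _ _)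
        f hf (fun i j => hOf i j)
      set f' : Fin (n + 1) → X → M := Fin.snoc f g0 with hf'
      have hf'mem : ∀ i, f' i ∈ C.carrier := by
        intro i
        refine Fin.lastCases ?_ ?_ i
        · rw [hf', Fin.snoc_last]; exact hg0mem
        · intro j; rw [hf', Fin.snoc_castSucc]; exact hf j
      have hOf' : ∀ i j : Fin (n + 1),
          O (Fin.castLE hle i) (Fin.castLE hle j) = {x | f' i x < f' j x} := by
        intro i j
        refine Fin.lastCases ?_ ?_ i
        · refine Fin.lastCases ?_ ?_ j
          · simp only [hf', Fin.snoc_last]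
            rw [hO1]
            ext x; simp
          · intro j'
            simp only [hf', Fin.snoc_last, Fin.snoc_castSucc]
            exact (hg0 j').2
        · intro i'
          refine Fin.lastCases ?_ ?_ j
          · simp only [hf', Fin.snoc_last, Fin.snoc_castSucc]
            exact (hg0 i').1
          · intro j'
            simp only [hf', Fin.snoc_castSucc]
            exact hOf i' j'
      have hcast : n + (k + 1) = (n + 1) + k := by omega
      obtain ⟨g, hgmem, hgf, hgO⟩ := ih (n + 1)
        (fun i j => O (Fin.cast hcast.symm i) (Fin.cast hcast.symm j))
        (fun i j => hopen _ _) (fun i j => hcoz _ _)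
        (fun i => hO1 _) (fun i j l => hO2 _ _ _) (fun i j l => hO3 _ _ _)
        f' hf'mem (fun i j => hOf' i j)
      refine ⟨fun i => g (Fin.cast hcast i), fun i => hgmem _, fun i => ?_, fun i j => ?_⟩
      · show g (Fin.cast hcast (Fin.castAdd (k + 1) i)) = f i
        have h1 : Fin.cast hcast (Fin.castAdd (k + 1) i) = Fin.castAdd k (Fin.castSucc i) := rfl
        rw [h1, hgf (Fin.castSucc i), hf', Fin.snoc_castSucc]
      · exact hgO (Fin.cast hcast i) (Fin.cast hcast j)

/-- Proposition 2.4 of the paper: an open sign condition consisting of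
`C`-cozero sets whose first `n × n` block is realized by `f₁, …, fₙ ∈ C` is realized
by `f₁, …, f_{n+k} ∈ C`. -/
theorem stmt_7 {X M : Type*} [TopologicalSpace X] [T2Space X]
    [AddCommGroup M] [LinearOrder M] [IsOrderedAddMonoid M] [Module ℚ M] [TopologicalSpace M] [OrderTopology M]
    (C : ConstructibleLGroup X M) (n k : ℕ)
    (O : Fin (n + k) → Fin (n + k) → Set X)
    (hopen : ∀ i j, IsOpen (O i j))
    (hcoz : ∀ i j, IsCozeroSetOf C.carrier (O i j))
    (hO1 : ∀ i, O i i = ∅)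
    (hO2 : ∀ i j l, O i j ∩ O j l ⊆ O i l)
    (hO3 : ∀ i j l, O i l ⊆ O i j ∪ O j l)
    (f : Fin n → X → M) (hf : ∀ i, f i ∈ C.carrier)
    (hOf : ∀ i j : Fin n, O (Fin.castAdd k i) (Fin.castAdd k j) = {x | f i x < f j x}) :
    ∃ g : Fin (n + k) → X → M,
      (∀ i, g i ∈ C.carrier) ∧
      (∀ i : Fin n, g (Fin.castAdd k i) = f i) ∧
      (∀ i j, O i j = {x | g i x < g j x}) :=
  stmt_7' C n k O hopen hcoz hO1 hO2 hO3 f hf hOf
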